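/- Let c, m, r be positive integers, Z a real m×c matrix, D a real c×r matrix, and L a real c×c matrix. Suppose: (i) ρ : Fin c → ℝ is strictly positive and the kernel of v ↦ L *ᵥ v equals the span of ρ; (ii) the kernel of v ↦ Dᵀ *ᵥ v equals the span of the all-ones vector 𝟙 (connectedness); and (iii) the only σ : Fin c → ℝ with Z *ᵥ σ = 0 and σ in the range of u ↦ D *ᵥ u is σ = 0 (zero deficiency, ker Z ∩ im D = 0). Then there exists μ : Fin m → ℝ with L *ᵥ (fun i => Real.exp ((Zᵀ *ᵥ μ) i)) = 0, i.e. the network is complex-balanced. -/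

import Mathlib

open Matrix

theorem zero_deficiency_implies_complex_balanced
    (c m r : ℕ) (hc : 0 < c) (hm : 0 < m) (hr : 0 < r)
    (Z : Matrix (Fin m) (Fin c) ℝ)
    (D : Matrix (Fin c) (Fin r) ℝ)
    (L : Matrix (Fin c) (Fin c) ℝ)
    (ρ : Fin c → ℝ) (hρ : ∀ i, 0 < ρ i)
    (hker : LinearMap.ker L.mulVecLin = Submodule.span ℝ {ρ})
    (hconn : LinearMap.ker (Matrix.mulVecLin Dᵀ) =
      Submodule.span ℝ {(fun _ => 1 : Fin c → ℝ)})
    (hdef : ∀ σ : Fin c → ℝ, Z *ᵥ σ = 0 → (∃ u : Fin r → ℝ, D *ᵥ u = σ) → σ = 0) :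
    ∃ μ : Fin m → ℝ, L *ᵥ (fun i => Real.exp ((Zᵀ *ᵥ μ) i)) = 0 := by
  classical
  have i0 : Fin c := ⟨0, hc⟩
  -- 𝟙 is in the kernel of Dᵀ
  have h1 : Dᵀ *ᵥ (fun _ => 1 : Fin c → ℝ) = 0 := by
    have : (fun _ => 1 : Fin c → ℝ) ∈ LinearMap.ker (Matrix.mulVecLin Dᵀ) := by
      rw [hconn]; exact Submodule.mem_span_singleton_self _
    simpa only [LinearMap.mem_ker, Matrix.mulVecLin_apply] using this
  -- sum functional
  set f : (Fin c → ℝ) →ₗ[ℝ] ℝ := ∑ i : Fin c, LinearMap.proj i with hf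
  have hfapp : ∀ v : Fin c → ℝ, f v = ∑ i, v i := by
    intro v; simp [hf]
  -- range D = ker f
  have hsum0 : ∀ u : Fin r → ℝ, f (D *ᵥ u) = 0 := by
    intro u
    have : (fun _ => 1 : Fin c → ℝ) ⬝ᵥ (D *ᵥ u) = 0 := by
      rw [Matrix.dotProduct_mulVec]
      have : (fun _ => 1 : Fin c → ℝ) ᵥ* D = 0 := by
        rw [← Matrix.mulVec_transpose D]; exact h1
      rw [this, zero_dotProduct]
    simpa [hfapp, dotProduct, one_mul] using this
  have hkerDT : Module.finrank ℝ (LinearMap.ker (Matrix.mulVecLin Dᵀ)) = 1 := by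
    rw [hconn]
    exact finrank_span_singleton (by
      intro h
      have := congrFun h i0
      norm_num at this)
  have hrankD : Module.finrank ℝ (LinearMap.range D.mulVecLin) = c - 1 := by
    have h2 : Module.finrank ℝ (LinearMap.range (Matrix.mulVecLin Dᵀ))
        + Module.finrank ℝ (LinearMap.ker (Matrix.mulVecLin Dᵀ)) = c := by
      simpa using LinearMap.finrank_range_add_finrank_ker (Matrix.mulVecLin Dᵀ)
    have h3 : Module.finrank ℝ (LinearMap.range (Matrix.mulVecLin Dᵀ)) = c - 1 := by
      omega
    have h4 : Dᵀ.rank = D.rank := Matrix.rank_transpose D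
    unfold Matrix.rank at h4
    rw [← h4, h3]
  have hkerf : Module.finrank ℝ (LinearMap.ker f) = c - 1 := by
    have hsurj : LinearMap.range f = ⊤ := by
      rw [LinearMap.range_eq_top]
      intro x
      exact ⟨Pi.single i0 x, by simp [hfapp, Pi.single_apply]⟩
    have h2 : Module.finrank ℝ (LinearMap.range f)
        + Module.finrank ℝ (LinearMap.ker f) = c := by
      simpa using LinearMap.finrank_range_add_finrank_ker f
    rw [hsurj] at h2
    simp [finrank_top] at h2
    omega
  have hDf : LinearMap.range D.mulVecLin = LinearMap.ker f := by
    apply Submodule.eq_of_le_of_finrank_eq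
    · rintro v ⟨u, rfl⟩
      exact hsum0 u
    · rw [hrankD, hkerf]
  -- work in Euclidean space
  set e : EuclideanSpace ℝ (Fin c) ≃ₗ[ℝ] (Fin c → ℝ) := WithLp.linearEquiv 2 ℝ (Fin c → ℝ) with he
  set W : Submodule ℝ (EuclideanSpace ℝ (Fin c)) :=
    LinearMap.range (e.symm.toLinearMap ∘ₗ Zᵀ.mulVecLin) ⊔
      Submodule.span ℝ {e.symm (fun _ => 1 : Fin c → ℝ)} with hW
  have hWtop : W = ⊤ := by
    rw [← Submodule.orthogonal_eq_bot_iff]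
    rw [Submodule.eq_bot_iff]
    intro x hx
    rw [Submodule.mem_orthogonal] at hx
    have hx1 : ∀ μ : Fin m → ℝ, ∑ i, (Zᵀ *ᵥ μ) i * (e x) i = 0 := by
      intro μ
      have := hx (e.symm (Zᵀ *ᵥ μ)) (Submodule.mem_sup_left ⟨μ, rfl⟩)
      have h' : ∑ i, (e.symm (Zᵀ *ᵥ μ)) i * x i = 0 := by
        simpa [PiLp.inner_apply, mul_comm] using this
      exact h'
    have hx2 : ∑ i, (e x) i = 0 := by
      have := hx (e.symm (fun _ => 1 : Fin c → ℝ))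
        (Submodule.mem_sup_right (Submodule.mem_span_singleton_self _))
      have h' : ∑ i, (e.symm (fun _ => 1 : Fin c → ℝ)) i * x i = 0 := by
        simpa [PiLp.inner_apply, mul_comm] using this
      have heq : ∀ i, (e.symm (fun _ => 1 : Fin c → ℝ)) i = 1 := fun i => rfl
      have hex : ∀ i, (e x) i = x i := fun i => rfl
      simp only [heq, hex, one_mul] at h' ⊢
      exact h'
    have hZx : Z *ᵥ (e x) = 0 := by
      funext j
      have h := hx1 (Pi.single j 1)
      have h2 : ∑ i, (Zᵀ *ᵥ Pi.single j 1) i * (e x) i = (Z *ᵥ (e x)) j := by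
        simp [Matrix.mulVec, dotProduct, Pi.single_apply, Matrix.transpose_apply,
          mul_comm, Finset.mul_sum, Finset.sum_ite_eq]
      rw [Pi.zero_apply, ← h2]
      exact h
    have hmem : e x ∈ LinearMap.range D.mulVecLin := by
      rw [hDf]
      simpa [hfapp] using hx2
    obtain ⟨u, hu⟩ := hmem
    have := hdef (e x) hZx ⟨u, hu⟩
    have : e x = 0 := this
    simpa using congrArg e.symm this
  -- extract μ and α
  have hmem : e.symm (fun i => Real.log (ρ i)) ∈ W := hWtop ▸ Submodule.mem_top
  rw [hW, Submodule.mem_sup] at hmem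
  obtain ⟨a, ⟨μ, ha⟩, b, hb, hab⟩ := hmem
  rw [Submodule.mem_span_singleton] at hb
  obtain ⟨α, hα⟩ := hb
  refine ⟨μ, ?_⟩
  -- show Zᵀ *ᵥ μ = log ρ - α • 𝟙
  have hfun : (Zᵀ *ᵥ μ) + α • (fun _ => 1 : Fin c → ℝ) = fun i => Real.log (ρ i) := by
    have h := congrArg e hab
    rw [← ha, ← hα, map_add, _root_.map_smul, LinearEquiv.apply_symm_apply] at h
    have h2 : e ((e.symm.toLinearMap ∘ₗ Zᵀ.mulVecLin) μ) = Zᵀ *ᵥ μ := by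
      simp [LinearMap.comp_apply, Matrix.mulVec_transpose]
    rw [h2, LinearEquiv.apply_symm_apply] at h
    exact h
  have key : ∀ i, (Zᵀ *ᵥ μ) i = Real.log (ρ i) - α := by
    intro i
    have := congrFun hfun i
    simp only [Pi.add_apply, Pi.smul_apply, smul_eq_mul, mul_one] at this
    linarith
  have hexp : (fun i => Real.exp ((Zᵀ *ᵥ μ) i)) = Real.exp (-α) • ρ := by
    funext i
    rw [key i, Real.exp_sub, Real.exp_log (hρ i)]
    simp [mul_comm, div_eq_mul_inv, Real.exp_neg]
  rw [hexp]
  have hρker : L *ᵥ ρ = 0 := by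
    have : ρ ∈ LinearMap.ker L.mulVecLin := by
      rw [hker]; exact Submodule.mem_span_singleton_self _
    simpa using this
  rw [Matrix.mulVec_smul, hρker, smul_zero]
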